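/- With s(ν, t) as above, if t ≥ Σ_k (μ_k² + σ_k²), then ∂s/∂ν > 0 for all ν > 0, so s(·, t) is strictly increasing in ν on (0, ∞), and consequently inf_{ν>0} s(ν, t) = lim_{ν→0⁺} s(ν, t) = 1. -/

import Mathlib

open Filter Set

/-- If t ≥ Σ_k (μ_k² + σ_k²), then ∂s/∂ν > 0 on (0,∞), s(·,t) is strictly
increasing on (0,∞), and inf_{ν>0} s(ν,t) = lim_{ν→0⁺} s(ν,t) = 1. -/
theorem stmt5 (K : ℕ) (hK : 0 < K) (μ v : Fin K → ℝ) (hv : ∀ k, 0 < v k) (t : ℝ)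
    (ht : ∑ k, ((μ k) ^ 2 + v k) ≤ t)
    (s : ℝ → ℝ)
    (hs : s = fun ν =>
      Real.exp (ν * t - ∑ k, (μ k) ^ 2 * ν / (1 + 2 * v k * ν)) /
        ∏ k, Real.sqrt (1 + 2 * v k * ν)) :
    (∀ ν > (0 : ℝ), 0 < deriv s ν) ∧ StrictMonoOn s (Ioi 0) ∧
      Tendsto s (nhdsWithin 0 (Ioi 0)) (nhds 1) ∧ sInf (s '' Ioi 0) = 1 := by
  have hc : ∀ (x : ℝ), 0 ≤ x → ∀ k : Fin K, 0 < 1 + 2 * v k * x := by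
    intro x hx k
    have := (hv k).le
    nlinarith
  set g : ℝ → ℝ := fun x => x * t - (∑ k, (μ k) ^ 2 * x / (1 + 2 * v k * x))
      - ∑ k, Real.log (1 + 2 * v k * x) / 2 with hg
  have hse : ∀ x ∈ Ioi (0:ℝ), s x = Real.exp (g x) := by
    intro x hx
    have hcx := hc x hx.le
    rw [hs, hg]
    simp only
    rw [show (∏ k, Real.sqrt (1 + 2 * v k * x)) = Real.exp (∑ k, Real.log (1 + 2 * v k * x) / 2) by
      rw [Real.exp_sum]
      refine Finset.prod_congr rfl fun k _ => ?_
      rw [← Real.log_sqrt (hcx k).le, Real.exp_log (Real.sqrt_pos.mpr (hcx k))]]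
    rw [← Real.exp_sub]
  -- derivative of g at ν > 0
  have hgd : ∀ ν ∈ Ioi (0:ℝ), HasDerivAt g
      (t - ∑ k, ((μ k) ^ 2 / (1 + 2 * v k * ν) ^ 2 + v k / (1 + 2 * v k * ν))) ν := by
    intro ν hν
    have hcν := hc ν hν.le
    have h1 : HasDerivAt (fun x : ℝ => x * t) t ν := by
      simpa using (hasDerivAt_id ν).mul_const t
    have hden : ∀ k : Fin K, HasDerivAt (fun x : ℝ => 1 + 2 * v k * x) (2 * v k) ν := by
      intro k
      simpa using ((hasDerivAt_id ν).const_mul (2 * v k)).const_add 1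
    have hA : ∀ k : Fin K, HasDerivAt (fun x : ℝ => (μ k) ^ 2 * x / (1 + 2 * v k * x))
        ((μ k) ^ 2 / (1 + 2 * v k * ν) ^ 2) ν := by
      intro k
      have hnum : HasDerivAt (fun x : ℝ => (μ k) ^ 2 * x) ((μ k) ^ 2) ν := by
        simpa using (hasDerivAt_id ν).const_mul ((μ k) ^ 2)
      have := hnum.div (hden k) (hcν k).ne'
      refine this.congr_deriv ?_
      congr 1
      ring
    have hB : ∀ k : Fin K, HasDerivAt (fun x : ℝ => Real.log (1 + 2 * v k * x) / 2)
        (v k / (1 + 2 * v k * ν)) ν := by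
      intro k
      have := ((hden k).log (hcν k).ne').div_const 2
      refine this.congr_deriv ?_
      ring
    have hSA : HasDerivAt (fun x : ℝ => ∑ k, (μ k) ^ 2 * x / (1 + 2 * v k * x))
        (∑ k, (μ k) ^ 2 / (1 + 2 * v k * ν) ^ 2) ν := HasDerivAt.fun_sum fun k _ => hA k
    have hSB : HasDerivAt (fun x : ℝ => ∑ k, Real.log (1 + 2 * v k * x) / 2)
        (∑ k, v k / (1 + 2 * v k * ν)) ν := HasDerivAt.fun_sum fun k _ => hB k
    have := (h1.sub hSA).sub hSB
    rw [hg]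
    refine this.congr_deriv ?_
    rw [Finset.sum_add_distrib]
    ring
  -- derivative of s at ν > 0
  have hsd : ∀ ν ∈ Ioi (0:ℝ), HasDerivAt s
      (Real.exp (g ν) * (t - ∑ k, ((μ k) ^ 2 / (1 + 2 * v k * ν) ^ 2 + v k / (1 + 2 * v k * ν)))) ν := by
    intro ν hν
    have hev : s =ᶠ[nhds ν] fun x => Real.exp (g x) :=
      eventually_of_mem (Ioi_mem_nhds hν) hse
    exact ((hgd ν hν).exp).congr_of_eventuallyEq hev
  -- positivity of the derivative factor
  have hpos : ∀ ν ∈ Ioi (0:ℝ),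
      0 < t - ∑ k, ((μ k) ^ 2 / (1 + 2 * v k * ν) ^ 2 + v k / (1 + 2 * v k * ν)) := by
    intro ν hν
    have hcν := hc ν hν.le
    have hlt : ∑ k, ((μ k) ^ 2 / (1 + 2 * v k * ν) ^ 2 + v k / (1 + 2 * v k * ν))
        < ∑ k, ((μ k) ^ 2 + v k) := by
      apply Finset.sum_lt_sum_of_nonempty
      · exact Finset.univ_nonempty_iff.mpr (Fin.pos_iff_nonempty.mp hK)
      · intro k _
        have hνp : (0:ℝ) < ν := mem_Ioi.mp hν
        have hc1 : (1:ℝ) ≤ 1 + 2 * v k * ν := by nlinarith [mul_pos (hv k) hνp]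
        have h1 : (μ k) ^ 2 / (1 + 2 * v k * ν) ^ 2 ≤ (μ k) ^ 2 := by
          rw [div_le_iff₀ (pow_pos (hcν k) 2)]
          nlinarith [sq_nonneg (μ k * (2 * v k * ν)),
            mul_nonneg (sq_nonneg (μ k)) (mul_pos (hv k) hνp).le]
        have h2 : v k / (1 + 2 * v k * ν) < v k := by
          rw [div_lt_iff₀ (hcν k)]
          nlinarith [mul_pos (hv k) hνp]
        linarith
    linarith
  have hderiv : ∀ ν > (0:ℝ), 0 < deriv s ν := by
    intro ν hν
    rw [(hsd ν hν).deriv]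
    exact mul_pos (Real.exp_pos _) (hpos ν hν)
  -- continuity of s on Ici 0
  have hcont : ContinuousOn s (Ici 0) := by
    rw [hs]
    apply ContinuousOn.div
    · apply Real.continuous_exp.comp_continuousOn
      apply ContinuousOn.sub
      · exact (continuous_id.mul continuous_const).continuousOn
      · apply continuousOn_finset_sum
        intro k _
        exact ContinuousOn.div
          ((continuous_const.mul continuous_id).continuousOn)
          ((continuous_const.add (continuous_const.mul continuous_id)).continuousOn)
          (fun x hx => (hc x hx k).ne')
    · apply Continuous.continuousOn
      apply continuous_finset_prod
      intro k _
      exact Real.continuous_sqrt.comp (continuous_const.add (continuous_const.mul continuous_id))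
    · intro x hx
      exact ne_of_gt (Finset.prod_pos fun k _ => Real.sqrt_pos.mpr (hc x hx k))
  -- strict monotonicity on Ici 0
  have hmono : StrictMonoOn s (Ici 0) := by
    apply strictMonoOn_of_deriv_pos (convex_Ici 0) hcont
    rw [interior_Ici]
    exact fun ν hν => hderiv ν hν
  -- s 0 = 1
  have hs0 : s 0 = 1 := by rw [hs]; simp
  -- tendsto
  have htend : Tendsto s (nhdsWithin 0 (Ioi 0)) (nhds 1) := by
    have := (hcont 0 self_mem_Ici).mono Ioi_subset_Ici_self
    rw [ContinuousWithinAt, hs0] at this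
    exact this
  refine ⟨hderiv, hmono.mono Ioi_subset_Ici_self, htend, ?_⟩
  have hlb : ∀ y ∈ s '' Ioi 0, (1:ℝ) ≤ y := by
    rintro y ⟨ν, hν, rfl⟩
    have := hmono self_mem_Ici (Ioi_subset_Ici_self hν) hν
    rw [hs0] at this
    exact this.le
  have hne : (s '' Ioi 0).Nonempty := ⟨s 1, 1, by norm_num, rfl⟩
  refine le_antisymm ?_ (le_csInf hne hlb)
  refine ge_of_tendsto htend ?_
  filter_upwards [eventually_mem_nhdsWithin] with x hx
  exact csInf_le ⟨1, hlb⟩ (mem_image_of_mem s hx)
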